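/- The |0⟩-controlled Z gate on two qutrits, defined by |i,j⟩ ↦ ω^{j·[i=0]}|i,j⟩ (applying Pauli Z to the second qutrit exactly when the first is |0⟩, with ω = e^{2πi/3}), is in the third level of the qutrit Clifford hierarchy: conjugating any two-qutrit Pauli by it yields a Clifford operator. In particular, pushing X⊗X^a through it produces a diagonal Clifford correction. -/

import Mathlib

open Matrix

noncomputable section

/-- The primitive third root of unity `ω = e^{2πi/3}`. -/
def ω : ℂ := Complex.exp (2 * Real.pi * Complex.I / 3)

/-- Pauli X on the `i`-th of `n` qutrits. -/
def XAt (n : ℕ) (i : Fin n) : Matrix (Fin n → ZMod 3) (Fin n → ZMod 3) ℂ :=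
  Matrix.of fun v w => if v = Function.update w i (w i + 1) then 1 else 0

/-- Pauli Z on the `i`-th of `n` qutrits. -/
def ZAt (n : ℕ) (i : Fin n) : Matrix (Fin n → ZMod 3) (Fin n → ZMod 3) ℂ :=
  Matrix.diagonal fun v => ω ^ (v i).val

/-- The `n`-qutrit Pauli group (as a submonoid of matrices). -/
def PauliGrp (n : ℕ) : Submonoid (Matrix (Fin n → ZMod 3) (Fin n → ZMod 3) ℂ) :=
  Submonoid.closure ({ω • 1} ∪ {M | ∃ i, M = XAt n i ∨ M = ZAt n i})

/-- A Clifford unitary: a unitary normalizing the Pauli group up to phase. -/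
def IsClifford (n : ℕ) (U : Matrix (Fin n → ZMod 3) (Fin n → ZMod 3) ℂ) : Prop :=
  U ∈ unitary (Matrix (Fin n → ZMod 3) (Fin n → ZMod 3) ℂ) ∧
    ∀ P ∈ PauliGrp n, ∃ (c : ℂ) (Q : Matrix (Fin n → ZMod 3) (Fin n → ZMod 3) ℂ),
      Q ∈ PauliGrp n ∧ U * P * Uᴴ = c • Q

/-- The `|0⟩`-controlled Z gate on two qutrits:
`|i,j⟩ ↦ ω^{j·[i=0]}|i,j⟩`. -/
def ZCZ : Matrix (Fin 2 → ZMod 3) (Fin 2 → ZMod 3) ℂ :=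
  Matrix.diagonal fun v => if v 0 = 0 then ω ^ (v 1).val else 1

/-! ### Auxiliary development -/

lemma omega_pow_three : ω ^ 3 = 1 := by
  rw [ω, ← Complex.exp_nat_mul]
  rw [show (3:ℕ) * (2 * ↑Real.pi * Complex.I / 3) = 2 * ↑Real.pi * Complex.I by
    push_cast; ring]
  exact Complex.exp_two_pi_mul_I

lemma star_omega_mul : star ω * ω = 1 := by
  rw [ω]
  rw [show (star (Complex.exp (2 * ↑Real.pi * Complex.I / 3)) : ℂ)
      = Complex.exp ((starRingEnd ℂ) (2 * ↑Real.pi * Complex.I / 3)) from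
    (Complex.exp_conj _).symm, ← Complex.exp_add]
  have : (starRingEnd ℂ) (2 * ↑Real.pi * Complex.I / 3) = -(2 * ↑Real.pi * Complex.I / 3) := by
    simp [map_div₀, Complex.conj_I, _root_.map_mul, _root_.map_ofNat]
    ring
  rw [this, neg_add_cancel, Complex.exp_zero]

/-- `ω` to a `ZMod 3` power. -/
def e (k : ZMod 3) : ℂ := ω ^ k.val

lemma omega_pow_mod (n : ℕ) : ω ^ n = ω ^ (n % 3) := by
  conv_lhs => rw [← Nat.div_add_mod n 3]
  rw [pow_add, pow_mul, omega_pow_three, one_pow, one_mul]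

lemma e_zero : e 0 = 1 := by simp [e]

lemma e_add (a b : ZMod 3) : e (a + b) = e a * e b := by
  rw [e, e, e, ZMod.val_add, ← omega_pow_mod, pow_add]

lemma star_e (k : ZMod 3) : star (e k) = e (-k) := by
  have h1 : e k * e (-k) = 1 := by rw [← e_add, add_neg_cancel, e_zero]
  have h2 : star (e k) * e k = 1 := by
    rw [e, star_pow, ← mul_pow, star_omega_mul, one_pow]
  calc star (e k) = star (e k) * (e k * e (-k)) := by rw [h1, mul_one]
    _ = (star (e k) * e k) * e (-k) := by ring
    _ = e (-k) := by rw [h2, one_mul]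

/-- The two-qutrit computational-basis index type. -/
abbrev V := Fin 2 → ZMod 3

/-- Shift (generalized X) matrix. -/
def Sh (a : V) : Matrix V V ℂ := Matrix.of fun v w => if v = w + a then 1 else 0

/-- Diagonal phase matrix with exponents `f`. -/
def Dg (f : V → ZMod 3) : Matrix V V ℂ := Matrix.diagonal fun v => e (f v)

lemma Dg_mul_Dg (f g : V → ZMod 3) : Dg f * Dg g = Dg (fun v => f v + g v) := by
  rw [Dg, Dg, Dg, diagonal_mul_diagonal]
  have : (fun i => e (f i) * e (g i)) = fun v => e (f v + g v) :=
    funext fun v => (e_add (f v) (g v)).symm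
  rw [this]

lemma Sh_mul_Dg (a : V) (f : V → ZMod 3) :
    Sh a * Dg f = Dg (fun v => f (v - a)) * Sh a := by
  ext v w
  rw [Dg, Dg, mul_diagonal, diagonal_mul]
  simp only [Sh, of_apply]
  by_cases h : v = w + a
  · subst h; rw [add_sub_cancel_right]; simp
  · simp [h]

lemma Sh_mul_Sh (a b : V) : Sh a * Sh b = Sh (a + b) := by
  ext v w
  rw [mul_apply]
  simp only [Sh, of_apply]
  rw [show w + (a + b) = w + b + a from by rw [add_comm a b, ← add_assoc]]
  rw [Finset.sum_eq_single (w + b)]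
  · by_cases h : v = w + b + a <;> simp [h]
  · intro u _ hu
    have : ¬ (u = w + b) := hu
    simp [this]
  · intro h; exact absurd (Finset.mem_univ _) h

lemma Sh_zero : Sh 0 = 1 := by
  ext v w
  simp only [Sh, of_apply, add_zero, one_apply]

lemma Dg_zero : Dg (fun _ => 0) = 1 := by
  rw [Dg]; simp [e_zero]

lemma Sh_conjTranspose (a : V) : (Sh a)ᴴ = Sh (-a) := by
  ext v w
  simp only [conjTranspose_apply, Sh, of_apply]
  have : (w = v + a) ↔ (v = w + -a) := by
    constructor <;> intro h <;> simp [h]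
  rw [if_congr this rfl rfl]
  split <;> simp

lemma Dg_conjTranspose (f : V → ZMod 3) : (Dg f)ᴴ = Dg (fun v => -(f v)) := by
  rw [Dg, Dg, diagonal_conjTranspose]
  have : (star fun v => e (f v)) = fun v => e (-(f v)) := funext fun v => star_e (f v)
  rw [this]

lemma PS_mul (f g : V → ZMod 3) (a b : V) :
    (Dg f * Sh a) * (Dg g * Sh b) = Dg (fun v => f v + g (v - a)) * Sh (a + b) := by
  rw [mul_assoc, ← mul_assoc (Sh a), Sh_mul_Dg, mul_assoc, Sh_mul_Sh, ← mul_assoc, Dg_mul_Dg]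

lemma PS_conjTranspose (f : V → ZMod 3) (a : V) :
    (Dg f * Sh a)ᴴ = Dg (fun v => -(f (v + a))) * Sh (-a) := by
  rw [conjTranspose_mul, Sh_conjTranspose, Dg_conjTranspose, Sh_mul_Dg]
  have : (fun v => -(f (v - -a))) = fun v => -(f (v + a)) := by
    funext v; rw [sub_neg_eq_add]
  rw [this]

lemma PS_unitary (f : V → ZMod 3) (a : V) : (Dg f * Sh a) ∈ unitary (Matrix V V ℂ) := by
  rw [Unitary.mem_iff]
  constructor
  · rw [Matrix.star_eq_conjTranspose, PS_conjTranspose, PS_mul]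
    have h1 : (fun v => -(f (v + a)) + f (v - -a)) = fun _ => (0 : ZMod 3) := by
      funext v; rw [sub_neg_eq_add, neg_add_cancel]
    rw [h1, neg_add_cancel, Dg_zero, Sh_zero, one_mul]
  · rw [Matrix.star_eq_conjTranspose, PS_conjTranspose, PS_mul]
    have h1 : (fun v => f v + -(f (v - a + a))) = fun _ => (0 : ZMod 3) := by
      funext v; rw [sub_add_cancel, add_neg_cancel]
    rw [h1, add_neg_cancel, Dg_zero, Sh_zero, one_mul]

/-- Standard basis vectors of `V`. -/
def uv (i : Fin 2) : V := fun j => if j = i then 1 else 0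

lemma XAt_eq (i : Fin 2) : XAt 2 i = Sh (uv i) := by
  ext v w
  simp only [XAt, Sh, of_apply]
  have : Function.update w i (w i + 1) = w + uv i := by
    funext j
    by_cases h : j = i
    · subst h; simp [Function.update, uv]
    · simp [Function.update, h, uv]
  rw [this]

lemma ZAt_eq (i : Fin 2) : ZAt 2 i = Dg (fun v => v i) := rfl

lemma smul_one_eq : ω • (1 : Matrix V V ℂ) = Dg (fun _ => 1) := by
  ext v w
  simp only [Dg, Matrix.smul_apply, one_apply, diagonal_apply, smul_ite, smul_zero]
  split
  · show ω • (1:ℂ) = e 1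
    simp [e, ZMod.val_one]
  · rfl

lemma Dg_pow (f : V → ZMod 3) (n : ℕ) : (Dg f) ^ n = Dg (fun v => (n : ZMod 3) * f v) := by
  induction n with
  | zero => simpa using Dg_zero.symm
  | succ k ih =>
    rw [pow_succ, ih, Dg_mul_Dg]
    refine congrArg Dg (funext fun v => ?_)
    push_cast; ring

lemma Sh_pow (a : V) (n : ℕ) : (Sh a) ^ n = Sh (fun j => (n : ZMod 3) * a j) := by
  induction n with
  | zero =>
    have : (fun j => ((0:ℕ) : ZMod 3) * a j) = (0 : V) := by
      funext j; push_cast; exact zero_mul _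
    rw [pow_zero, this, Sh_zero]
  | succ k ih =>
    rw [pow_succ, ih, Sh_mul_Sh]
    refine congrArg Sh (funext fun j => ?_)
    show ((k:ZMod 3)) * a j + a j = ((k+1 : ℕ) : ZMod 3) * a j
    push_cast; ring

lemma mem_pauli (c : ZMod 3) (β a : V) :
    Dg (fun v => c + β 0 * v 0 + β 1 * v 1) * Sh a ∈ PauliGrp 2 := by
  have h1 : (ω • 1 : Matrix V V ℂ) ∈ PauliGrp 2 :=
    Submonoid.subset_closure (Or.inl rfl)
  have hX : ∀ i, XAt 2 i ∈ PauliGrp 2 := fun i =>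
    Submonoid.subset_closure (Or.inr ⟨i, Or.inl rfl⟩)
  have hZ : ∀ i, ZAt 2 i ∈ PauliGrp 2 := fun i =>
    Submonoid.subset_closure (Or.inr ⟨i, Or.inr rfl⟩)
  have key : Dg (fun v => c + β 0 * v 0 + β 1 * v 1) * Sh a =
      (ω • 1) ^ c.val * (ZAt 2 0) ^ (β 0).val * (ZAt 2 1) ^ (β 1).val *
      (XAt 2 0) ^ (a 0).val * (XAt 2 1) ^ (a 1).val := by
    rw [smul_one_eq, ZAt_eq, ZAt_eq, XAt_eq, XAt_eq, Dg_pow, Dg_pow, Dg_pow, Sh_pow, Sh_pow,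
      Dg_mul_Dg, Dg_mul_Dg, mul_assoc, Sh_mul_Sh]
    congr 1
    · refine congrArg Dg (funext fun v => ?_)
      simp [ZMod.natCast_val, ZMod.cast_id]
    · refine congrArg Sh (funext fun j => ?_)
      fin_cases j <;> simp [uv, ZMod.natCast_val, ZMod.cast_id]
  rw [key]
  exact mul_mem (mul_mem (mul_mem (mul_mem (pow_mem h1 _) (pow_mem (hZ 0) _))
    (pow_mem (hZ 1) _)) (pow_mem (hX 0) _)) (pow_mem (hX 1) _)

lemma pauli_form (P : Matrix V V ℂ) (hP : P ∈ PauliGrp 2) :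
    ∃ (c : ZMod 3) (β a : V), P = Dg (fun v => c + β 0 * v 0 + β 1 * v 1) * Sh a := by
  induction hP using Submonoid.closure_induction with
  | mem M hM =>
    rcases hM with h | ⟨i, h | h⟩
    · refine ⟨1, 0, 0, ?_⟩
      rw [Set.mem_singleton_iff.mp h, smul_one_eq, Sh_zero, mul_one]
      refine congrArg Dg (funext fun v => ?_)
      simp
    · refine ⟨0, 0, uv i, ?_⟩
      rw [h, XAt_eq]
      have : (fun v : V => (0:ZMod 3) + (0:V) 0 * v 0 + (0:V) 1 * v 1) = fun _ => 0 := by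
        funext v; simp
      rw [this, Dg_zero, one_mul]
    · refine ⟨0, uv i, 0, ?_⟩
      rw [h, ZAt_eq, Sh_zero, mul_one]
      refine congrArg Dg (funext fun v => ?_)
      fin_cases i <;> simp [uv]
  | one =>
    refine ⟨0, 0, 0, ?_⟩
    rw [Sh_zero, mul_one]
    have : (fun v : V => (0:ZMod 3) + (0:V) 0 * v 0 + (0:V) 1 * v 1) = fun _ => 0 := by
      funext v; simp
    rw [this, Dg_zero]
  | mul x y hx hy ihx ihy =>
    obtain ⟨c₁, β₁, a₁, rfl⟩ := ihx
    obtain ⟨c₂, β₂, a₂, rfl⟩ := ihy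
    refine ⟨c₁ + c₂ - β₂ 0 * a₁ 0 - β₂ 1 * a₁ 1, β₁ + β₂, a₁ + a₂, ?_⟩
    rw [PS_mul]
    congr 1
    refine congrArg Dg (funext fun v => ?_)
    simp only [Pi.sub_apply, Pi.add_apply]
    ring

/-- The diagonal exponent function of `ZCZ`. -/
def hfun : V → ZMod 3 := fun v => if v 0 = 0 then v 1 else 0

lemma ZCZ_eq : ZCZ = Dg hfun := by
  rw [ZCZ, Dg]
  refine congrArg Matrix.diagonal (funext fun v => ?_)
  by_cases h : v 0 = 0 <;> simp [hfun, h, e, ZMod.val_zero]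

set_option maxRecDepth 10000 in
lemma sd_key : ∀ a b v : V,
    hfun v - hfun (v - a) - hfun (v - b) + hfun (v - a - b) =
      (a 0 ^ 2 * b 1 + a 1 * b 0 ^ 2 - a 0 * b 0 * b 1 - a 0 * a 1 * b 0)
        + (a 0 * b 1 + a 1 * b 0) * v 0 + (a 0 * b 0) * v 1 := by decide

/-- The `|0⟩`-controlled Z gate is in the third level of the qutrit Clifford
hierarchy: conjugating any two-qutrit Pauli by it yields a Clifford operator. -/
theorem ZCZ_third_level :
    ∀ P ∈ PauliGrp 2, IsClifford 2 (ZCZ * P * ZCZᴴ) := by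
  intro P hP
  obtain ⟨c₁, β₁, a, rfl⟩ := pauli_form P hP
  have hU : ZCZ * ((Dg fun v => c₁ + β₁ 0 * v 0 + β₁ 1 * v 1) * Sh a) * ZCZᴴ
      = Dg (fun v => (hfun v + (c₁ + β₁ 0 * v 0 + β₁ 1 * v 1)) + -(hfun (v - a))) * Sh a := by
    rw [ZCZ_eq, Dg_conjTranspose]
    rw [show Dg hfun * ((Dg fun v => c₁ + β₁ 0 * v 0 + β₁ 1 * v 1) * Sh a)
          * Dg (fun v => -(hfun v))
        = (Dg hfun * Sh 0) * (((Dg fun v => c₁ + β₁ 0 * v 0 + β₁ 1 * v 1) * Sh a)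
          * (Dg (fun v => -(hfun v)) * Sh 0)) from by
      rw [Sh_zero, mul_one, mul_one, mul_assoc]]
    rw [PS_mul, PS_mul]
    congr 1
    · refine congrArg Dg (funext fun v => ?_)
      rw [show v - (0:V) = v from sub_zero v]
      ring
    · refine congrArg Sh ?_
      rw [add_zero, zero_add]
  rw [hU]
  constructor
  · exact PS_unitary _ _
  · intro P' hP'
    obtain ⟨c₂, β₂, b, rfl⟩ := pauli_form P' hP'
    set C : ZMod 3 :=
      (a 0 ^ 2 * b 1 + a 1 * b 0 ^ 2 - a 0 * b 0 * b 1 - a 0 * a 1 * b 0)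
        + (β₁ 0 * b 0 + β₁ 1 * b 1) + c₂ - (β₂ 0 * a 0 + β₂ 1 * a 1) with hC
    set β₃ : V := ![β₂ 0 + (a 0 * b 1 + a 1 * b 0), β₂ 1 + a 0 * b 0] with hβ₃
    refine ⟨1, _, mem_pauli C β₃ b, ?_⟩
    rw [one_smul, PS_conjTranspose, PS_mul, PS_mul]
    congr 1
    · refine congrArg Dg (funext fun v => ?_)
      have hv1 : v - (a + b) + a = v - b := by
        funext j; simp only [Pi.sub_apply, Pi.add_apply]; ring
      have hv2 : v - b - a = v - a - b := by
        funext j; simp only [Pi.sub_apply]; ring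
      rw [hv1, hv2]
      simp only [hβ₃, Matrix.cons_val_zero, Matrix.cons_val_one, Matrix.head_cons,
        Pi.sub_apply, hC]
      linear_combination sd_key a b v
    · refine congrArg Sh ?_
      funext j
      simp only [Pi.add_apply, Pi.neg_apply]
      ring
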